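/- Let p be a probability vector on a finite set Λ and let Φ be a diagonal affine IFS on ℝ^d with contraction ratios r_{i,j}. For every ε > 0 there exists δ = δ(p,ε) > 0 such that: for every n ≥ 1 and every probability vector q = (q_u)_{u∈Λⁿ} with (1/n)H(q) ≥ H(p) − δ and |(1/n)Σ_{u∈Λⁿ} q_u log|r_{u,j}| − Σ_{i∈Λ} p_i log|r_{i,j}|| ≤ δ for each 1 ≤ j ≤ d, one has dim_L({φ_u}_{u∈Λⁿ}, q) > dim_L(Φ, p) − ε. -/

import Mathlib

open Finset Classical

/-- The Lyapunov dimension associated to an entropy `E` and exponents `χ` (which get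
reordered increasingly): with `m = max{0 ≤ j ≤ d : χ₁+…+χ_j ≤ E}`, it equals
`m + (E − χ₁ − … − χ_m)/χ_{m+1}` when `m < d` and `d·E/(χ₁+…+χ_d)` when `m = d`. -/
noncomputable def lyapDim (d : ℕ) (E : ℝ) (χ : Fin d → ℝ) : ℝ :=
  let g : ℕ → ℝ := fun k => if h : k < d then χ (Tuple.sort χ ⟨k, h⟩) else 0
  let m : ℕ := Nat.findGreatest (fun j => ∑ k ∈ range j, g k ≤ E) d
  if m < d then (m : ℝ) + (E - ∑ k ∈ range m, g k) / g m
  else (d : ℝ) * E / ∑ k ∈ range d, g k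

noncomputable def gv (d : ℕ) (χ : Fin d → ℝ) (k : ℕ) : ℝ :=
  if h : k < d then χ (Tuple.sort χ ⟨k, h⟩) else 0

lemma lyapDim_def (d : ℕ) (E : ℝ) (χ : Fin d → ℝ) : lyapDim d E χ =
    if Nat.findGreatest (fun j => ∑ k ∈ range j, gv d χ k ≤ E) d < d then
      ((Nat.findGreatest (fun j => ∑ k ∈ range j, gv d χ k ≤ E) d : ℝ) +
        (E - ∑ k ∈ range (Nat.findGreatest (fun j => ∑ k ∈ range j, gv d χ k ≤ E) d),
          gv d χ k) / gv d χ (Nat.findGreatest (fun j => ∑ k ∈ range j, gv d χ k ≤ E) d))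
    else (d : ℝ) * E / ∑ k ∈ range d, gv d χ k := rfl

lemma sorted_le {d : ℕ} (χ χ' : Fin d → ℝ) (δ : ℝ)
    (h : ∀ j, χ j ≤ χ' j + δ) (k : Fin d) :
    χ (Tuple.sort χ k) ≤ χ' (Tuple.sort χ' k) + δ := by
  set σ := Tuple.sort χ with hσ
  set τ := Tuple.sort χ' with hτ
  have hex : ∃ a ∈ (Finset.Iic k).image τ, k ≤ σ.symm a := by
    by_contra hcon
    push_neg at hcon
    have hsub : ((Finset.Iic k).image τ).image (σ.symm : Fin d → Fin d) ⊆ Finset.Iio k := by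
      intro x hx
      obtain ⟨a, ha, rfl⟩ := Finset.mem_image.1 hx
      exact Finset.mem_Iio.2 (hcon a ha)
    have hc1 : (((Finset.Iic k).image τ).image (σ.symm : Fin d → Fin d)).card = (k : ℕ) + 1 := by
      rw [Finset.card_image_of_injective _ σ.symm.injective,
        Finset.card_image_of_injective _ τ.injective, Fin.card_Iic]
    have hc2 := Finset.card_le_card hsub
    rw [hc1, Fin.card_Iio] at hc2
    omega
  obtain ⟨a, haA, hka⟩ := hex
  obtain ⟨i, hik, rfl⟩ := Finset.mem_image.1 haA
  have h1 : χ (σ k) ≤ χ (σ (σ.symm (τ i))) := Tuple.monotone_sort χ hka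
  rw [Equiv.apply_symm_apply] at h1
  have h2 : χ' (τ i) ≤ χ' (τ k) := Tuple.monotone_sort χ' (Finset.mem_Iic.1 hik)
  have h3 := h (τ i)
  linarith

lemma gv_close {d : ℕ} {χ χ' : Fin d → ℝ} {δ : ℝ}
    (h : ∀ j, |χ' j - χ j| ≤ δ) {k : ℕ} (hk : k < d) :
    |gv d χ' k - gv d χ k| ≤ δ := by
  rw [abs_sub_le_iff]
  constructor
  · have := sorted_le χ' χ δ (fun j => by have := (abs_sub_le_iff.1 (h j)).1; linarith) ⟨k, hk⟩
    simp only [gv, dif_pos hk]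
    linarith
  · have := sorted_le χ χ' δ (fun j => by have := (abs_sub_le_iff.1 (h j)).2; linarith) ⟨k, hk⟩
    simp only [gv, dif_pos hk]
    linarith

lemma gv_ge {d : ℕ} {χ : Fin d → ℝ} {c : ℝ} (hc : ∀ j, c ≤ χ j) {k : ℕ} (hk : k < d) :
    c ≤ gv d χ k := by
  simp only [gv, dif_pos hk]; exact hc _

lemma gv_scale {d : ℕ} (χ : Fin d → ℝ) {c : ℝ} (hc : 0 < c) (k : ℕ) :
    gv d (fun j => c * χ j) k = c * gv d χ k := by
  by_cases hk : k < d
  · simp only [gv, dif_pos hk]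
    have h1 : Monotone ((fun j => c * χ j) ∘ Tuple.sort χ) := fun a b hab => by
      have := Tuple.monotone_sort χ hab
      simp only [Function.comp] at this ⊢
      exact mul_le_mul_of_nonneg_left this hc.le
    have h2 := Tuple.unique_monotone (f := fun j => c * χ j)
      (Tuple.monotone_sort (fun j => c * χ j)) h1
    exact congrFun h2 ⟨k, hk⟩
  · simp only [gv, dif_neg hk, mul_zero]

lemma lyapDim_scale {d : ℕ} (E : ℝ) (χ : Fin d → ℝ) {c : ℝ} (hc : 0 < c) :
    lyapDim d (c * E) (fun j => c * χ j) = lyapDim d E χ := by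
  rw [lyapDim_def, lyapDim_def]
  have hsum : ∀ j : ℕ, ∑ k ∈ range j, gv d (fun j => c * χ j) k = c * ∑ k ∈ range j, gv d χ k := by
    intro j
    rw [Finset.mul_sum]
    exact Finset.sum_congr rfl fun k _ => gv_scale χ hc k
  have hpred : ∀ j : ℕ,
      (∑ k ∈ range j, gv d (fun j => c * χ j) k ≤ c * E) ↔ (∑ k ∈ range j, gv d χ k ≤ E) := by
    intro j
    rw [hsum]
    exact mul_le_mul_iff_right₀ hc
  have hm : Nat.findGreatest (fun j => ∑ k ∈ range j, gv d (fun j => c * χ j) k ≤ c * E) d =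
      Nat.findGreatest (fun j => ∑ k ∈ range j, gv d χ k ≤ E) d := by
    apply le_antisymm
    · exact Nat.findGreatest_mono_left (fun n hn => (hpred n).1 hn) d
    · exact Nat.findGreatest_mono_left (fun n hn => (hpred n).2 hn) d
  rw [hm]
  set m := Nat.findGreatest (fun j => ∑ k ∈ range j, gv d χ k ≤ E) d with hmdef
  by_cases hmd : m < d
  · rw [if_pos hmd, if_pos hmd, hsum, gv_scale χ hc]
    congr 1
    rw [show c * E - c * ∑ k ∈ range m, gv d χ k = c * (E - ∑ k ∈ range m, gv d χ k) by ring,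
      mul_div_mul_left _ _ (ne_of_gt hc)]
  · rw [if_neg hmd, if_neg hmd, hsum]
    rw [show (d : ℝ) * (c * E) = c * ((d:ℝ) * E) by ring, mul_div_mul_left _ _ (ne_of_gt hc)]

lemma lyapDim_mono {d : ℕ} (hd : 1 ≤ d) (χ : Fin d → ℝ) (hχ : ∀ j, 0 < χ j)
    {E₁ E₂ : ℝ} (h : E₁ ≤ E₂) : lyapDim d E₁ χ ≤ lyapDim d E₂ χ := by
  rw [lyapDim_def, lyapDim_def]
  have hgpos : ∀ k, k < d → 0 < gv d χ k := by
    intro k hk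
    simp only [gv, dif_pos hk]
    exact hχ _
  have hSpos : (0:ℝ) < ∑ k ∈ range d, gv d χ k := by
    apply Finset.sum_pos (fun k hk => hgpos k (mem_range.1 hk))
    exact ⟨0, mem_range.2 hd⟩
  have hmono := Nat.findGreatest_mono_left
    (P := fun j => ∑ k ∈ range j, gv d χ k ≤ E₁) (Q := fun j => ∑ k ∈ range j, gv d χ k ≤ E₂)
    (fun n hn => hn.trans h) d
  set m₁ := Nat.findGreatest (fun j => ∑ k ∈ range j, gv d χ k ≤ E₁) d with hm₁
  set m₂ := Nat.findGreatest (fun j => ∑ k ∈ range j, gv d χ k ≤ E₂) d with hm₂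
  have hm₂d : m₂ ≤ d := Nat.findGreatest_le d
  rcases eq_or_lt_of_le hmono with heq | hlt
  · rw [← heq]
    by_cases hmd : m₁ < d
    · rw [if_pos hmd, if_pos hmd]
      have := hgpos m₁ hmd
      gcongr
    · rw [if_neg hmd, if_neg hmd]
      gcongr
  · -- m₁ < m₂, so m₁ < d
    have hm₁d : m₁ < d := lt_of_lt_of_le hlt hm₂d
    rw [if_pos hm₁d]
    have hgm₁ := hgpos m₁ hm₁d
    have hupper : (E₁ - ∑ k ∈ range m₁, gv d χ k) / gv d χ m₁ < 1 := by
      rw [div_lt_one hgm₁]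
      have hnot : ¬ (∑ k ∈ range (m₁ + 1), gv d χ k ≤ E₁) :=
        Nat.findGreatest_is_greatest (k := m₁ + 1) (by rw [← hm₁]; omega) (by omega)
      rw [Finset.sum_range_succ] at hnot
      linarith [not_le.1 hnot]
    by_cases hm₂lt : m₂ < d
    · rw [if_pos hm₂lt]
      have hnum : 0 ≤ (E₂ - ∑ k ∈ range m₂, gv d χ k) / gv d χ m₂ := by
        apply div_nonneg _ (hgpos m₂ hm₂lt).le
        have hP : ∑ k ∈ range m₂, gv d χ k ≤ E₂ :=
          Nat.findGreatest_of_ne_zero hm₂.symm (by omega)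
        linarith
      have : (m₁ : ℝ) + 1 ≤ (m₂ : ℝ) := by exact_mod_cast hlt
      linarith
    · rw [if_neg hm₂lt]
      have hm₂d' : m₂ = d := le_antisymm hm₂d (not_lt.1 hm₂lt)
      have hP : ∑ k ∈ range m₂, gv d χ k ≤ E₂ :=
        Nat.findGreatest_of_ne_zero hm₂.symm (by omega)
      rw [hm₂d'] at hP
      have hdle : (d : ℝ) ≤ (d : ℝ) * E₂ / ∑ k ∈ range d, gv d χ k := by
        rw [le_div_iff₀ hSpos]
        have : (0:ℝ) ≤ d := Nat.cast_nonneg d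
        nlinarith
      have : (m₁ : ℝ) + 1 ≤ (d : ℝ) := by exact_mod_cast hm₁d
      linarith

set_option maxHeartbeats 2000000 in
lemma lyapDim_core {d : ℕ} (hd : 1 ≤ d) (χ : Fin d → ℝ) (hχ : ∀ j, 0 < χ j)
    (E : ℝ) (hE : 0 ≤ E) (ε : ℝ) (hε : 0 < ε) :
    ∃ δ : ℝ, 0 < δ ∧ ∀ (χ' : Fin d → ℝ) (E' : ℝ),
      (∀ j, |χ' j - χ j| ≤ δ) → |E' - E| ≤ δ →
      lyapDim d E χ - ε < lyapDim d E' χ' := by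
  haveI hne : Nonempty (Fin d) := Fin.pos_iff_nonempty.1 hd
  obtain ⟨j₀, -, hj₀⟩ := Finset.exists_min_image Finset.univ χ Finset.univ_nonempty
  set c := χ j₀ with hcdef
  have hc : 0 < c := hχ j₀
  have hcχ : ∀ j, c ≤ χ j := fun j => hj₀ j (Finset.mem_univ j)
  have hgc : ∀ k, k < d → c ≤ gv d χ k := fun k hk => gv_ge hcχ hk
  set S := ∑ k ∈ range d, gv d χ k with hSdef
  have hScd : (d : ℝ) * c ≤ S := by
    calc (d : ℝ) * c = ∑ _k ∈ range d, c := by simp [mul_comm]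
    _ ≤ S := Finset.sum_le_sum fun k hk => hgc k (mem_range.1 hk)
  have hd1 : (1 : ℝ) ≤ (d : ℝ) := by exact_mod_cast hd
  have hSpos : 0 < S := lt_of_lt_of_le (by nlinarith) hScd
  set k1 : ℝ := ((d : ℝ) + 2) / (c / 2) with hk1def
  set k2 : ℝ := (d : ℝ) * ((d : ℝ) * E + S) / (S * S) with hk2def
  set k3 : ℝ := ((d : ℝ) + 1) / c + ((d : ℝ) + 2) / c with hk3def
  set k4 : ℝ := (d : ℝ) * ((d : ℝ) + 1) / S + ((d : ℝ) + 2) / c with hk4def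
  have hk1 : 0 ≤ k1 := by positivity
  have hk2 : 0 ≤ k2 := by
    apply div_nonneg _ (by positivity)
    have : (0:ℝ) ≤ (d:ℝ) * E := by positivity
    nlinarith
  have hk3 : 0 ≤ k3 := by positivity
  have hk4 : 0 ≤ k4 := by positivity
  set K : ℝ := k1 + k2 + k3 + k4 with hKdef
  have hK : 0 ≤ K := by linarith
  refine ⟨min (c / (2 * (d : ℝ) + 4)) (ε / (2 * (K + 1))), lt_min (by positivity) (by positivity), ?_⟩
  set δ := min (c / (2 * (d : ℝ) + 4)) (ε / (2 * (K + 1))) with hδdef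
  have hδ0 : 0 ≤ δ := le_min (by positivity) (by positivity)
  have hδa : δ * (2 * (d : ℝ) + 4) ≤ c := by
    have h1 : δ ≤ c / (2 * (d : ℝ) + 4) := min_le_left _ _
    have h2 : (0:ℝ) < 2 * (d : ℝ) + 4 := by positivity
    calc δ * (2 * (d : ℝ) + 4) ≤ (c / (2 * (d : ℝ) + 4)) * (2 * (d : ℝ) + 4) := by
          exact mul_le_mul_of_nonneg_right h1 h2.le
    _ = c := by field_simp
  have hKδ : (K + 1) * δ ≤ ε / 2 := by
    have h1 : δ ≤ ε / (2 * (K + 1)) := min_le_right _ _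
    have h2 : (0:ℝ) < K + 1 := by linarith
    calc (K + 1) * δ ≤ (K + 1) * (ε / (2 * (K + 1))) := mul_le_mul_of_nonneg_left h1 h2.le
    _ = ε / 2 := by field_simp
  have hδc2 : δ ≤ c / 2 := by nlinarith
  have hδd1 : ((d : ℝ) + 1) * δ ≤ c / 2 := by nlinarith
  clear_value k1 k2 k3 k4 K δ
  intro χ' E' hχ' hE'
  have hclose : ∀ k, k < d → |gv d χ' k - gv d χ k| ≤ δ := fun k hk => gv_close hχ' hk
  have hg'low : ∀ k, k < d → c / 2 ≤ gv d χ' k := by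
    intro k hk
    have h1 := (abs_le.1 (hclose k hk)).1
    have h2 := hgc k hk
    linarith
  have hSclose : ∀ j, j ≤ d →
      |∑ k ∈ range j, gv d χ' k - ∑ k ∈ range j, gv d χ k| ≤ (d : ℝ) * δ := by
    intro j hj
    rw [← Finset.sum_sub_distrib]
    refine (Finset.abs_sum_le_sum_abs _ _).trans ?_
    calc ∑ k ∈ range j, |gv d χ' k - gv d χ k| ≤ ∑ _k ∈ range j, δ :=
          Finset.sum_le_sum fun k hk => hclose k (lt_of_lt_of_le (mem_range.1 hk) hj)
    _ = (j : ℝ) * δ := by simp [mul_comm]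
    _ ≤ (d : ℝ) * δ := mul_le_mul_of_nonneg_right (by exact_mod_cast hj) hδ0
  have hE'low : E - δ ≤ E' := by linarith [(abs_le.1 hE').1]
  have hE'high : E' ≤ E + δ := by linarith [(abs_le.1 hE').2]
  rw [lyapDim_def, lyapDim_def]
  set m := Nat.findGreatest (fun j => ∑ k ∈ range j, gv d χ k ≤ E) d with hm
  set m' := Nat.findGreatest (fun j => ∑ k ∈ range j, gv d χ' k ≤ E') d with hm'
  have hmd : m ≤ d := Nat.findGreatest_le d
  have hm'd : m' ≤ d := Nat.findGreatest_le d
  have hSmE : ∑ k ∈ range m, gv d χ k ≤ E := by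
    rcases Nat.eq_zero_or_pos m with h0 | h0
    · rw [h0]; simpa using hE
    · exact Nat.findGreatest_of_ne_zero hm.symm (by omega)
  have hES : m < d → E < ∑ k ∈ range (m + 1), gv d χ k := by
    intro h
    exact not_le.1 (Nat.findGreatest_is_greatest (k := m + 1) (by rw [← hm]; omega) (by omega))
  have hS'm' : 1 ≤ m' → ∑ k ∈ range m', gv d χ' k ≤ E' :=
    fun h => Nat.findGreatest_of_ne_zero hm'.symm (by omega)
  have hE'S' : m' < d → E' < ∑ k ∈ range (m' + 1), gv d χ' k := by
    intro h
    exact not_le.1 (Nat.findGreatest_is_greatest (k := m' + 1) (by rw [← hm']; omega) (by omega))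
  set G := gv d χ with hGdef
  set G' := gv d χ' with hG'def
  clear_value G G' m m'
  clear_value S c
  clear hm hm' hGdef hG'def hδdef hcdef hj₀ hχ hχ' hE'
  by_cases hm'lt : m' < d
  · rw [if_pos hm'lt]
    have hgm' : c ≤ G m' := hgc m' hm'lt
    have hg'm' : c / 2 ≤ G' m' := hg'low m' hm'lt
    have hg'm'pos : 0 < G' m' := lt_of_lt_of_le (by positivity) hg'm'
    have hg'ub : G' m' ≤ G m' + δ := by linarith [(abs_le.1 (hclose m' hm'lt)).2]
    rcases lt_or_ge m' m with hBcase | hAcase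
    · -- Case B : m' < m
      have hm1 : 1 ≤ m := by omega
      have hm'd2 : m' + 1 ≤ d := by omega
      have hb1 : E' < ∑ k ∈ range (m' + 1), G' k := hE'S' hm'lt
      have hb2 : ∑ k ∈ range (m' + 1), G' k ≤
          ∑ k ∈ range (m' + 1), G k + (d : ℝ) * δ := by
        linarith [(abs_le.1 (hSclose (m' + 1) hm'd2)).2]
      have hb3 : E < ∑ k ∈ range (m' + 1), G k + ((d : ℝ) + 1) * δ := by
        nlinarith [hE'high, hb1, hb2]
      have hmeq : m = m' + 1 := by
        by_contra hneq
        have h2 : m' + 2 ≤ m := by omega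
        have hsub : ∑ k ∈ range (m' + 2), G k ≤ ∑ k ∈ range m, G k := by
          apply Finset.sum_le_sum_of_subset_of_nonneg (by simpa using Finset.range_subset_range.2 h2)
          intro k hk _
          exact le_trans hc.le (hgc k (lt_of_lt_of_le (mem_range.1 hk) hmd))
        rw [Finset.sum_range_succ] at hsub
        have hcg : c ≤ G (m' + 1) := hgc _ (by omega)
        linarith [hSmE, hb3, hδd1]
      -- lower bound for primed fraction
      have hN' : G m' - ((d : ℝ) + 1) * δ ≤ E' - ∑ k ∈ range m', G' k := by
        have h1 := (abs_le.1 (hSclose m' (by omega))).2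
        have h2 : ∑ k ∈ range (m' + 1), G k =
            ∑ k ∈ range m', G k + G m' := Finset.sum_range_succ _ _
        have h3 := hSmE
        rw [hmeq, h2] at h3
        linarith
      have hnum0 : 0 ≤ G m' - ((d : ℝ) + 1) * δ := by linarith [hδd1]
      have hfrac : 1 - ((d : ℝ) + 2) * δ / c ≤
          (E' - ∑ k ∈ range m', G' k) / G' m' := by
        have step1 : (G m' - ((d : ℝ) + 1) * δ) / (G m' + δ) ≤
            (E' - ∑ k ∈ range m', G' k) / G' m' :=
          div_le_div₀ (by linarith) hN' hg'm'pos hg'ub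
        have hgδpos : 0 < G m' + δ := by linarith
        have step2 : 1 - ((d : ℝ) + 2) * δ / (G m' + δ) =
            (G m' - ((d : ℝ) + 1) * δ) / (G m' + δ) := by
          field_simp
          ring
        have step3 : ((d : ℝ) + 2) * δ / (G m' + δ) ≤ ((d : ℝ) + 2) * δ / c := by
          apply div_le_div_of_nonneg_left (by positivity) hc (by linarith)
        linarith
      by_cases hmlt : m < d
      · rw [if_pos hmlt]
        have hNbound : E - ∑ k ∈ range m, G k ≤ ((d : ℝ) + 1) * δ := by
          have h2 : ∑ k ∈ range m, G k = ∑ k ∈ range (m' + 1), G k := by rw [hmeq]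
          linarith [hb3]
        have hN0 : 0 ≤ E - ∑ k ∈ range m, G k := by linarith [hSmE]
        have hgm : c ≤ G m := hgc m hmlt
        have hFub : (E - ∑ k ∈ range m, G k) / G m ≤ ((d : ℝ) + 1) * δ / c :=
          div_le_div₀ (by positivity) hNbound hc hgm
        have hcast : (m : ℝ) = (m' : ℝ) + 1 := by exact_mod_cast hmeq
        have hsum : ((d : ℝ) + 1) * δ / c + ((d : ℝ) + 2) * δ / c = k3 * δ := by
          rw [hk3def]; field_simp
        have hk3K : k3 * δ ≤ (K + 1) * δ := mul_le_mul_of_nonneg_right (by linarith) hδ0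
        linarith
      · rw [if_neg hmlt]
        have hmd2 : m = d := by omega
        have hm'1d : m' + 1 = d := by omega
        have hESb : E < S + ((d : ℝ) + 1) * δ := by
          have hSS : ∑ k ∈ range (m' + 1), G k = S := by rw [hSdef, hm'1d]
          linarith [hb3, hSS.le, hSS.ge]
        have hFub : (d : ℝ) * E / S ≤ (d : ℝ) + (d : ℝ) * ((d : ℝ) + 1) * δ / S := by
          have h : (d : ℝ) + (d : ℝ) * ((d : ℝ) + 1) * δ / S =
              ((d : ℝ) * S + (d : ℝ) * ((d : ℝ) + 1) * δ) / S := by field_simp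
          rw [h]
          gcongr
          nlinarith [hESb]
        have hcast : (m' : ℝ) + 1 = (d : ℝ) := by exact_mod_cast hm'1d
        have hsum : (d : ℝ) * ((d : ℝ) + 1) * δ / S + ((d : ℝ) + 2) * δ / c = k4 * δ := by
          rw [hk4def]; field_simp
        have hk4K : k4 * δ ≤ (K + 1) * δ := mul_le_mul_of_nonneg_right (by linarith) hδ0
        rw [← hSdef]
        linarith
    · -- Case A : m ≤ m'
      rcases eq_or_lt_of_le hAcase with heq | hlt'
      · -- m = m'
        have hmlt : m < d := heq ▸ hm'lt
        rw [if_pos hmlt]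
        rw [← heq] at hg'm' hg'm'pos hg'ub ⊢
        have hgm : c ≤ G m := hgc m hmlt
        have hgmpos : 0 < G m := lt_of_lt_of_le hc hgm
        have hN0 : 0 ≤ E - ∑ k ∈ range m, G k := by linarith [hSmE]
        have hNg : E - ∑ k ∈ range m, G k ≤ G m := by
          have := hES hmlt
          rw [Finset.sum_range_succ] at this
          linarith
        have hNN' : (E - ∑ k ∈ range m, G k) - ((d : ℝ) + 1) * δ ≤
            E' - ∑ k ∈ range m, G' k := by
          linarith [(abs_le.1 (hSclose m (by omega))).2]
        have hkey : (E - ∑ k ∈ range m, G k) * G' m -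
            (E' - ∑ k ∈ range m, G' k) * G m ≤
            ((d : ℝ) + 2) * δ * G m := by
          nlinarith [mul_le_mul_of_nonneg_right hNN' hgmpos.le,
            mul_le_mul_of_nonneg_left hg'ub hN0,
            mul_le_mul_of_nonneg_right hNg hδ0]
        have hdenpos : 0 < G m * G' m := mul_pos hgmpos hg'm'pos
        have e1 : (E - ∑ k ∈ range m, G k) / G m -
            (E' - ∑ k ∈ range m, G' k) / G' m =
            ((E - ∑ k ∈ range m, G k) * G' m -
              (E' - ∑ k ∈ range m, G' k) * G m) / (G m * G' m) := by
          field_simp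
        have e2 : ((E - ∑ k ∈ range m, G k) * G' m -
              (E' - ∑ k ∈ range m, G' k) * G m) / (G m * G' m) ≤
            (((d : ℝ) + 2) * δ * G m) / (G m * G' m) :=
          div_le_div_of_nonneg_right hkey hdenpos.le
        have e3 : (((d : ℝ) + 2) * δ * G m) / (G m * G' m) =
            ((d : ℝ) + 2) * δ / G' m := by
          rw [mul_comm (G m) (G' m), mul_div_mul_right _ _ (ne_of_gt hgmpos)]
        have e4 : ((d : ℝ) + 2) * δ / G' m ≤ ((d : ℝ) + 2) * δ / (c / 2) :=
          div_le_div_of_nonneg_left (by positivity) (by positivity) hg'm'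
        have e5 : ((d : ℝ) + 2) * δ / (c / 2) = k1 * δ := by
          rw [hk1def, div_mul_eq_mul_div]
        have hk1K : k1 * δ ≤ (K + 1) * δ := mul_le_mul_of_nonneg_right (by linarith) hδ0
        linarith
      · -- m < m'
        have hmlt : m < d := by omega
        rw [if_pos hmlt]
        have hgm : c ≤ G m := hgc m hmlt
        have hgmpos : 0 < G m := lt_of_lt_of_le hc hgm
        have hflt : (E - ∑ k ∈ range m, G k) / G m < 1 := by
          rw [div_lt_one hgmpos]
          have := hES hmlt
          rw [Finset.sum_range_succ] at this
          linarith
        have hN'0 : 0 ≤ (E' - ∑ k ∈ range m', G' k) / G' m' :=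
          div_nonneg (by linarith [hS'm' (by omega)]) hg'm'pos.le
        have hcast : (m : ℝ) + 1 ≤ (m' : ℝ) := by exact_mod_cast hlt'
        linarith
  · -- m' = d
    rw [if_neg hm'lt]
    have hm'd2 : m' = d := by omega
    have hP'd : ∑ k ∈ range d, G' k ≤ E' := by
      have := hS'm' (by omega)
      rw [hm'd2] at this
      exact this
    have hS'pos : 0 < ∑ k ∈ range d, G' k :=
      Finset.sum_pos (fun k hk => lt_of_lt_of_le (by positivity) (hg'low k (mem_range.1 hk)))
        ⟨0, mem_range.2 hd⟩
    by_cases hmlt : m < d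
    · rw [if_pos hmlt]
      have hgm : c ≤ G m := hgc m hmlt
      have hgmpos : 0 < G m := lt_of_lt_of_le hc hgm
      have hflt : (E - ∑ k ∈ range m, G k) / G m < 1 := by
        rw [div_lt_one hgmpos]
        have := hES hmlt
        rw [Finset.sum_range_succ] at this
        linarith
      have hdle : (d : ℝ) ≤ (d : ℝ) * E' / ∑ k ∈ range d, G' k := by
        rw [le_div_iff₀ hS'pos]
        nlinarith [hP'd, (Nat.cast_nonneg d : (0:ℝ) ≤ (d : ℝ))]
      have hcast : (m : ℝ) + 1 ≤ (d : ℝ) := by exact_mod_cast hmlt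
      linarith
    · rw [if_neg hmlt]
      have hmd2 : m = d := by omega
      have hSE : S ≤ E := by
        have h := hSmE
        rw [hmd2] at h
        rw [hSdef]
        exact h
      have hEδ : δ ≤ E := by nlinarith [hδa, hScd, hc]
      have hS'ub : ∑ k ∈ range d, G' k ≤ S + (d : ℝ) * δ := by
        linarith [(abs_le.1 (hSclose d le_rfl)).2]
      have hF'lb : (d : ℝ) * (E - δ) / (S + (d : ℝ) * δ) ≤
          (d : ℝ) * E' / ∑ k ∈ range d, G' k := by
        apply div_le_div₀ (mul_nonneg (Nat.cast_nonneg d) (by linarith)) _ hS'pos hS'ub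
        nlinarith [hE'low, (Nat.cast_nonneg d : (0:ℝ) ≤ (d : ℝ))]
      have hSδpos : 0 < S + (d : ℝ) * δ := by positivity
      have hdiff : (d : ℝ) * E / S - (d : ℝ) * (E - δ) / (S + (d : ℝ) * δ) ≤ k2 * δ := by
        rw [div_sub_div _ _ (ne_of_gt hSpos) (ne_of_gt hSδpos), hk2def,
          div_mul_eq_mul_div, div_le_div_iff₀ (mul_pos hSpos hSδpos) (by positivity)]
        have hx : (0:ℝ) ≤ ((d:ℝ) * ((d:ℝ) * E + S) * δ) * ((d:ℝ) * δ * S) := by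
          have h1 : (0:ℝ) ≤ (d:ℝ) * E := mul_nonneg (Nat.cast_nonneg d) hE
          have h2 : (0:ℝ) ≤ (d:ℝ) * ((d:ℝ) * E + S) * δ :=
            mul_nonneg (mul_nonneg (Nat.cast_nonneg d) (by linarith)) hδ0
          have h3 : (0:ℝ) ≤ (d:ℝ) * δ * S :=
            mul_nonneg (mul_nonneg (Nat.cast_nonneg d) hδ0) hSpos.le
          exact mul_nonneg h2 h3
        nlinarith [hx]
      have hk2K : k2 * δ ≤ (K + 1) * δ := mul_le_mul_of_nonneg_right (by linarith) hδ0
      rw [← hSdef]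
      linarith


set_option maxHeartbeats 1000000 in
/-- Continuity of the Lyapunov dimension: if `q` is a probability vector on `Λⁿ` whose
normalized entropy and normalized Lyapunov exponents are `δ`-close to those of `p`, then
`dim_L({φ_u}_{u∈Λⁿ}, q) > dim_L(Φ, p) − ε`. -/
theorem stmt10 {Λ : Type*} [Fintype Λ] [Nonempty Λ] (d : ℕ) (hd : 1 ≤ d)
    (r : Λ → Fin d → ℝ) (hr : ∀ i j, r i j ≠ 0 ∧ |r i j| < 1)
    (p : Λ → ℝ) (hp0 : ∀ i, 0 ≤ p i) (hp1 : ∑ i, p i = 1) :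
    ∀ ε : ℝ, 0 < ε → ∃ δ : ℝ, 0 < δ ∧
      ∀ n : ℕ, 1 ≤ n → ∀ q : (Fin n → Λ) → ℝ,
        (∀ u, 0 ≤ q u) → (∑ u, q u = 1) →
        ((∑ i, -(p i * Real.logb 2 (p i))) - δ ≤
          (1 / (n : ℝ)) * ∑ u, -(q u * Real.logb 2 (q u))) →
        (∀ j : Fin d,
          abs ((1 / (n : ℝ)) * (∑ u, q u * ∑ k, Real.logb 2 |r (u k) j|) -
            ∑ i, p i * Real.logb 2 |r i j|) ≤ δ) →
        lyapDim d (∑ u, -(q u * Real.logb 2 (q u)))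
            (fun j => -∑ u, q u * ∑ k, Real.logb 2 |r (u k) j|) >
          lyapDim d (∑ i, -(p i * Real.logb 2 (p i)))
            (fun j => -∑ i, p i * Real.logb 2 |r i j|) - ε := by
  intro ε hε
  have hlogb : ∀ (i : Λ) (j : Fin d), Real.logb 2 |r i j| < 0 :=
    fun i j => Real.logb_neg one_lt_two (abs_pos.2 (hr i j).1) (hr i j).2
  -- entropy of p is nonnegative
  have hEp0 : 0 ≤ ∑ i, -(p i * Real.logb 2 (p i)) := by
    apply Finset.sum_nonneg
    intro i _
    rcases eq_or_lt_of_le (hp0 i) with h0 | h0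
    · simp [← h0]
    · have hle1 : p i ≤ 1 := by
        rw [← hp1]
        exact Finset.single_le_sum (fun j _ => hp0 j) (Finset.mem_univ i)
      have hl := Real.logb_nonpos (b := 2) one_lt_two (hp0 i) hle1
      nlinarith
  -- positivity of the Lyapunov exponents of p
  have hχp : ∀ j : Fin d, 0 < -∑ i, p i * Real.logb 2 |r i j| := by
    intro j
    rw [neg_pos]
    obtain ⟨i₀, -, hi₀⟩ : ∃ i ∈ Finset.univ, p i ≠ 0 :=
      Finset.exists_ne_zero_of_sum_ne_zero (by rw [hp1]; exact one_ne_zero)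
    have hpi₀ : 0 < p i₀ := (hp0 i₀).lt_of_ne (Ne.symm hi₀)
    have h := Finset.sum_lt_sum (s := Finset.univ)
      (f := fun i => p i * Real.logb 2 |r i j|) (g := fun _ => (0:ℝ))
      (fun i _ => mul_nonpos_of_nonneg_of_nonpos (hp0 i) (hlogb i j).le)
      ⟨i₀, Finset.mem_univ i₀, mul_neg_of_pos_of_neg hpi₀ (hlogb i₀ j)⟩
    simpa using h
  obtain ⟨δ, hδpos, hδ⟩ := lyapDim_core hd
    (fun j => -∑ i, p i * Real.logb 2 |r i j|) hχp
    (∑ i, -(p i * Real.logb 2 (p i))) hEp0 ε hε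
  refine ⟨δ, hδpos, ?_⟩
  intro n hn q hq0 hq1 hqEnt hqLyap
  haveI : Nonempty (Fin n) := Fin.pos_iff_nonempty.1 hn
  have hnpos : (0:ℝ) < (n : ℝ) := by exact_mod_cast hn
  have h1n : (0:ℝ) < 1 / (n : ℝ) := by positivity
  -- positivity of the Lyapunov exponents of q
  have hχq : ∀ j : Fin d, 0 < -∑ u, q u * ∑ k, Real.logb 2 |r (u k) j| := by
    intro j
    rw [neg_pos]
    have hX : ∀ u : Fin n → Λ, (∑ k, Real.logb 2 |r (u k) j|) < 0 := by
      intro u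
      have := Finset.sum_lt_sum_of_nonempty (s := (Finset.univ : Finset (Fin n)))
        Finset.univ_nonempty (f := fun k => Real.logb 2 |r (u k) j|) (g := fun _ => (0:ℝ))
        (fun k _ => hlogb (u k) j)
      simpa using this
    obtain ⟨u₀, -, hu₀⟩ : ∃ u ∈ Finset.univ, q u ≠ 0 :=
      Finset.exists_ne_zero_of_sum_ne_zero (by rw [hq1]; exact one_ne_zero)
    have hqu₀ : 0 < q u₀ := (hq0 u₀).lt_of_ne (Ne.symm hu₀)
    have h := Finset.sum_lt_sum (s := Finset.univ)
      (f := fun u => q u * ∑ k, Real.logb 2 |r (u k) j|) (g := fun _ => (0:ℝ))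
      (fun u _ => mul_nonpos_of_nonneg_of_nonpos (hq0 u) (hX u).le)
      ⟨u₀, Finset.mem_univ u₀, mul_neg_of_pos_of_neg hqu₀ (hX u₀)⟩
    simpa using h
  -- rescale by 1/n
  have hhom : lyapDim d (∑ u, -(q u * Real.logb 2 (q u)))
      (fun j => -∑ u, q u * ∑ k, Real.logb 2 |r (u k) j|) =
      lyapDim d ((1 / (n : ℝ)) * ∑ u, -(q u * Real.logb 2 (q u)))
      (fun j => (1 / (n : ℝ)) * -∑ u, q u * ∑ k, Real.logb 2 |r (u k) j|) := by
    have h := lyapDim_scale (d := d) (∑ u, -(q u * Real.logb 2 (q u)))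
      (fun j => -∑ u, q u * ∑ k, Real.logb 2 |r (u k) j|) h1n
    exact h.symm
  rw [hhom]
  have hχ'pos : ∀ j : Fin d,
      0 < (1 / (n : ℝ)) * -∑ u, q u * ∑ k, Real.logb 2 |r (u k) j| :=
    fun j => mul_pos h1n (hχq j)
  set E' := (1 / (n : ℝ)) * ∑ u, -(q u * Real.logb 2 (q u)) with hE'def
  set Ep := ∑ i, -(p i * Real.logb 2 (p i)) with hEpdef
  have hmono : lyapDim d (min E' Ep)
      (fun j => (1 / (n : ℝ)) * -∑ u, q u * ∑ k, Real.logb 2 |r (u k) j|) ≤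
      lyapDim d E'
      (fun j => (1 / (n : ℝ)) * -∑ u, q u * ∑ k, Real.logb 2 |r (u k) j|) :=
    lyapDim_mono hd _ hχ'pos (min_le_left _ _)
  have hclose : ∀ j : Fin d,
      abs ((1 / (n : ℝ)) * -∑ u, q u * ∑ k, Real.logb 2 |r (u k) j| -
        -∑ i, p i * Real.logb 2 |r i j|) ≤ δ := by
    intro j
    have h := hqLyap j
    have heq : (1 / (n : ℝ)) * -∑ u, q u * ∑ k, Real.logb 2 |r (u k) j| -
        -∑ i, p i * Real.logb 2 |r i j| =
        -((1 / (n : ℝ)) * (∑ u, q u * ∑ k, Real.logb 2 |r (u k) j|) -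
          ∑ i, p i * Real.logb 2 |r i j|) := by ring
    rw [heq, abs_neg]
    exact h
  have hEmin : |min E' Ep - Ep| ≤ δ := by
    rw [abs_le]
    constructor
    · have h1 : Ep - δ ≤ E' := hqEnt
      have h2 : Ep - δ ≤ Ep := by linarith
      have := le_min h1 h2
      linarith
    · have := min_le_right E' Ep
      linarith
  have hcore := hδ (fun j => (1 / (n : ℝ)) * -∑ u, q u * ∑ k, Real.logb 2 |r (u k) j|)
    (min E' Ep) hclose hEmin
  calc lyapDim d Ep (fun j => -∑ i, p i * Real.logb 2 |r i j|) - ε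
      < lyapDim d (min E' Ep)
        (fun j => (1 / (n : ℝ)) * -∑ u, q u * ∑ k, Real.logb 2 |r (u k) j|) := hcore
    _ ≤ lyapDim d E'
        (fun j => (1 / (n : ℝ)) * -∑ u, q u * ∑ k, Real.logb 2 |r (u k) j|) := hmono
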